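/- For all nonnegative integers i and j and every nonnegative integer N with N ≤ q³, the number of exponents n < N for which the coefficient of X^n in the power series X^i · Y^j ∈ F[[X]] is nonzero is at most q. -/

import Mathlib

/-- The formal power series `Y = Σ_{b=0}^∞ (-1)^b X^{(q+1)q^b}` in `F[[X]]`. -/
noncomputable def Yser (q : ℕ) (F : Type) [Field F] : PowerSeries F :=
  PowerSeries.mk fun n =>
    ∑ b ∈ Finset.range (n + 1), if n = (q + 1) * q ^ b then (-1 : F) ^ b else 0

open PowerSeries Finset in
lemma Yser_coeff_eq (q : ℕ) (hq2 : 2 ≤ q) (F : Type) [Field F] {m : ℕ}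
    (hm : m < (q + 1) * q ^ 2) :
    PowerSeries.coeff (R := F) m (Yser q F) =
      PowerSeries.coeff (R := F) m ((X : PowerSeries F) ^ (q + 1) - X ^ ((q + 1) * q)) := by
  have hq0 : 0 < q := by omega
  rw [map_sub, coeff_X_pow, coeff_X_pow]
  simp only [Yser, coeff_mk]
  by_cases h0 : m = q + 1
  · have hne : m ≠ (q + 1) * q := by subst h0; nlinarith
    rw [if_pos h0, if_neg hne]
    rw [Finset.sum_eq_single 0]
    · rw [if_pos (by simpa using h0), pow_zero, sub_zero]
    · intro b _ hb
      rw [if_neg]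
      intro h
      have : q ≤ q ^ b := Nat.le_self_pow hb q
      nlinarith [h0, h]
    · intro h; exact absurd (Finset.mem_range.2 (by omega)) h
  · by_cases h1 : m = (q + 1) * q
    · rw [if_neg h0, if_pos h1]
      rw [Finset.sum_eq_single 1]
      · rw [if_pos (by simpa using h1), pow_one, zero_sub]
      · intro b _ hb
        rw [if_neg]
        intro h
        rw [h1] at h
        have : q ^ 1 = q ^ b := by
          have := Nat.eq_of_mul_eq_mul_left (show 0 < q + 1 by omega) h
          simpa using this
        exact hb (Nat.pow_right_injective hq2 this).symm
      · intro h
        exact absurd (Finset.mem_range.2 (by nlinarith)) h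
    · rw [if_neg h0, if_neg h1, sub_zero]
      apply Finset.sum_eq_zero
      intro b _
      rw [if_neg]
      intro h
      rcases Nat.lt_or_ge b 2 with hb | hb
      · interval_cases b
        · exact h0 (by simpa using h)
        · exact h1 (by simpa using h)
      · have : q ^ 2 ≤ q ^ b := Nat.pow_le_pow_right hq0 hb
        nlinarith

open PowerSeries Finset

/-- Let `F` be the field with `q²` elements, `q = p^e`.  For all nonnegative integers `i`,
`j` and every `N ≤ q³`, the number of exponents `n < N` for which the coefficient of `X^n`
in the power series `X^i · Y^j` is nonzero is at most `q`. -/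
theorem stmt_16 (p e : ℕ) (hp : p.Prime) (he : 0 < e) (q : ℕ) (hq : q = p ^ e)
    (F : Type) [Field F] [Fintype F] (hF : Fintype.card F = q ^ 2)
    (i j N : ℕ) (hN : N ≤ q ^ 3) :
    Set.ncard {n : ℕ | n < N ∧
      PowerSeries.coeff (R := F) n ((PowerSeries.X : PowerSeries F) ^ i * Yser q F ^ j) ≠ 0} ≤ q := by
  have hq2 : 2 ≤ q := by
    rw [hq]
    calc 2 = 2 ^ 1 := rfl
    _ ≤ p ^ e := Nat.pow_le_pow_left hp.two_le 1 |>.trans (Nat.pow_le_pow_right hp.pos he)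
  set Y₀ : PowerSeries F := (X : PowerSeries F) ^ (q + 1) - X ^ ((q + 1) * q) with hY₀
  have hdvd : (X : PowerSeries F) ^ ((q + 1) * q ^ 2) ∣ Yser q F - Y₀ :=
    X_pow_dvd_iff.2 fun m hm => by
      rw [map_sub, Yser_coeff_eq q hq2 F hm, sub_self]
  have hdvd2 : (X : PowerSeries F) ^ ((q + 1) * q ^ 2) ∣ (Yser q F) ^ j - Y₀ ^ j :=
    hdvd.trans (sub_dvd_pow_sub_pow _ _ j)
  have hfact : Y₀ = (X : PowerSeries F) ^ (q + 1) * (1 - X ^ (q ^ 2 - 1)) := by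
    rw [mul_sub, mul_one, ← pow_add, hY₀]
    congr 2
    have h1 : 1 ≤ q ^ 2 := Nat.one_le_pow _ _ (by omega)
    zify [h1]; ring
  have hsub : {n : ℕ | n < N ∧
      PowerSeries.coeff (R := F) n ((PowerSeries.X : PowerSeries F) ^ i * Yser q F ^ j) ≠ 0} ⊆
      ↑((Finset.range q).image (fun b => i + (q + 1) * j + b * (q ^ 2 - 1))) := by
    rintro n ⟨hnN, hne⟩
    rw [coeff_X_pow_mul'] at hne
    by_cases hin : i ≤ n
    swap
    · rw [if_neg hin] at hne; exact absurd rfl hne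
    rw [if_pos hin] at hne
    -- replace Yser^j by Y₀^j
    have hlt : n - i < (q + 1) * q ^ 2 := by
      have h1 : n - i ≤ n := Nat.sub_le n i
      have h2 : q ^ 3 < (q + 1) * q ^ 2 := by nlinarith [Nat.one_le_pow 2 q (show 0 < q by omega)]
      omega
    have hcoeq : PowerSeries.coeff (R := F) (n - i) ((Yser q F) ^ j) =
        PowerSeries.coeff (R := F) (n - i) (Y₀ ^ j) := by
      have := X_pow_dvd_iff.1 hdvd2 (n - i) hlt
      rw [map_sub, sub_eq_zero] at this
      exact this
    rw [hcoeq, hfact, mul_pow, ← pow_mul, coeff_X_pow_mul'] at hne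
    by_cases hin2 : (q + 1) * j ≤ n - i
    swap
    · rw [if_neg hin2] at hne; exact absurd rfl hne
    rw [if_pos hin2] at hne
    set k := n - i - (q + 1) * j with hk
    rw [sub_pow] at hne
    rw [map_sum] at hne
    obtain ⟨b, hb, hbne⟩ := Finset.exists_ne_zero_of_sum_ne_zero hne
    have hkey : k = (q ^ 2 - 1) * (j - b) := by
      by_contra hkk
      apply hbne
      rw [one_pow, mul_one, ← pow_mul]
      have : ((-1 : PowerSeries F) ^ (b + j) * X ^ ((q ^ 2 - 1) * (j - b)) * (j.choose b : PowerSeries F))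
          = PowerSeries.C (R := F) ((-1 : F) ^ (b + j) * (j.choose b : F)) * X ^ ((q ^ 2 - 1) * (j - b)) := by
        ring_nf
        simp [mul_comm, mul_assoc, mul_left_comm]
      rw [this, coeff_C_mul, coeff_X_pow, if_neg hkk, mul_zero]
    have hn : n = i + (q + 1) * j + k := by omega
    set b' := j - b with hb'
    have hb'j : b' ≤ j := Nat.sub_le _ _
    have hblt : b' < q := by
      by_contra hge
      push_neg at hge
      have hj1 : 1 ≤ j := le_trans (by omega) hb'j
      have h2 : q ^ 2 = (q ^ 2 - 1) + 1 := by
        have := Nat.one_le_pow 2 q (show 0 < q by omega); omega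
      have h3 : q ^ 3 = q * q ^ 2 := by ring
      nlinarith [hn, hkey, hnN, hN, Nat.mul_le_mul_right (q ^ 2 - 1) hge,
        Nat.mul_le_mul_left (q + 1) hj1]
    refine Finset.mem_coe.2 (Finset.mem_image.2 ⟨b', Finset.mem_range.2 hblt, ?_⟩)
    rw [hn, hkey]
    ring
  have hfin := Set.ncard_le_ncard hsub (Finset.finite_toSet _)
  rw [Set.ncard_coe_finset] at hfin
  exact hfin.trans (Finset.card_image_le.trans (Finset.card_range q).le)
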